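/- For every integer n ≥ 1 there exists a sizeable graph of rank n. That is, there exist finite types A and B, a simple graph Γ on the disjoint union A ⊔ B all of whose edges join an element of A to an element of B, and families of subsets A_i^s ⊆ A and B_j^t ⊆ B indexed by i, j ∈ {1, …, n} and s, t ∈ {+, −}, such that: (i) each A_i^s and each B_j^t is nonempty, the sets A_i^s are pairwise disjoint with union A, and the sets B_j^t are pairwise disjoint with union B; (ii) Γ contains no embedded cycle of length 4; and (iii) for every choice of i, j ∈ {1, …, n} and s, t ∈ {+, −}, the subgraph of Γ induced on A_i^s ∪ B_j^t is connected. -/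

import Mathlib

namespace SizeableProof

lemma pow_gap {M a b : ℕ} (hM : 1 ≤ M) (hab : a < b) : M^a + M ≤ M^b + 1 := by
  have h1 : M^a * M ≤ M^b := by
    calc M^a * M = M^(a+1) := (pow_succ M a).symm
    _ ≤ M^b := Nat.pow_le_pow_right hM hab
  have h2 : 1 ≤ M^a := Nat.one_le_pow _ _ hM
  nlinarith

section Defs

def iot {n : ℕ} (k : Fin n × Bool) : ℕ := 2 * (k.1 : ℕ) + (if k.2 then 1 else 0)

lemma iot_lt {n : ℕ} (k : Fin n × Bool) : iot k < 2*n := by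
  have := k.1.2
  unfold iot
  rcases k.2 <;> simp <;> omega

lemma iot_inj {n : ℕ} {k k' : Fin n × Bool} (h : iot k = iot k') : k = k' := by
  rcases k with ⟨i, s⟩
  rcases k' with ⟨i', s'⟩
  rcases s <;> rcases s' <;> simp [iot, Prod.ext_iff, Fin.ext_iff] at h ⊢ <;> omega

def MM (n : ℕ) : ℕ := 5 * ((2*n) * (2*n))

def wgt (n : ℕ) (e : ℕ) (k l : Fin n × Bool) : ℕ :=
  iot k * MM n ^ iot l + e * (1 + iot k + 2*n * iot l)

def Erel (n p : ℕ) (a b : (Fin n × Bool) × ZMod p) : Prop :=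
  ∃ e, e ≤ 1 ∧ b.2 = a.2 + ((wgt n e a.1 b.1 : ℕ) : ZMod p)

def Gam (n p : ℕ) :
    SimpleGraph (((Fin n × Bool) × ZMod p) ⊕ ((Fin n × Bool) × ZMod p)) where
  Adj u v := match u, v with
    | Sum.inl a, Sum.inr b => Erel n p a b
    | Sum.inr b, Sum.inl a => Erel n p a b
    | _, _ => False
  symm := ⟨by rintro (a|b) (c|d) h <;> exact h⟩
  loopless := ⟨by rintro (a|b) h <;> exact h⟩

end Defs

lemma dbound {m i j : ℕ} (hm : 2 ≤ m) (hi : i < m) (hj : j < m) : 1 + i + m*j ≤ m*m := by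
  have h1 : m*(j+1) ≤ m*m := Nat.mul_le_mul (le_refl m) (by omega)
  rw [Nat.mul_succ] at h1
  linarith

lemma wgt_le {n : ℕ} (hn : 1 ≤ n) {e : ℕ} (he : e ≤ 1) (k l : Fin n × Bool) :
    wgt n e k l ≤ MM n ^ (2*n) := by
  have hm : 2 ≤ 2*n := by omega
  have hM1 : 1 ≤ MM n := by unfold MM; nlinarith
  have hd : 1 + iot k + 2*n * iot l ≤ 2*n*(2*n) := dbound hm (iot_lt k) (iot_lt l)
  have h1 : iot k * MM n ^ iot l ≤ (2*n) * MM n ^ (2*n-1) :=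
    Nat.mul_le_mul (iot_lt k).le (Nat.pow_le_pow_right hM1 (by have := iot_lt l; omega))
  have h2 : e * (1 + iot k + 2*n * iot l) ≤ 2*n*(2*n) :=
    le_trans (Nat.mul_le_mul he (le_refl _)) (by linarith)
  have hMm : MM n ^ (2*n) = MM n ^ (2*n-1) * MM n := by
    rw [← pow_succ]
    congr 1
    omega
  have hX : 1 ≤ MM n ^ (2*n-1) := Nat.one_le_pow _ _ (by omega)
  have hA : 2*n * MM n ^ (2*n-1) ≤ (2*n*(2*n)) * MM n ^ (2*n-1) :=
    Nat.mul_le_mul_right _ (Nat.le_mul_of_pos_right _ (by omega))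
  have hB : 2*n*(2*n) ≤ (2*n*(2*n)) * MM n ^ (2*n-1) :=
    Nat.le_mul_of_pos_right _ (by omega)
  have hMdef : MM n = 5*((2*n)*(2*n)) := rfl
  have hC : (2*n*(2*n)) * MM n ^ (2*n-1) * 5 = MM n ^ (2*n-1) * MM n := by
    rw [hMdef]; ring
  unfold wgt
  rw [hMm]
  linarith [h1, h2, hA, hB, hC]

lemma cast_eq_of_lt {p a b : ℕ} (ha : a < p) (hb : b < p) (h : (a : ZMod p) = b) : a = b := by
  have h2 := (ZMod.natCast_eq_natCast_iff a b p).1 h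
  rwa [Nat.ModEq, Nat.mod_eq_of_lt ha, Nat.mod_eq_of_lt hb] at h2


lemma gap_lemma {m M i1 i2 j1 j2 : ℕ} (hm : 2 ≤ m) (hM : M = 5*(m*m))
    (hii : i1 < i2) (hjj : j1 < j2) :
    i2 * M^j1 + i1 * M^j2 + 3*(m*m) ≤ i1 * M^j1 + i2 * M^j2 := by
  have hM1 : 1 ≤ M := by nlinarith
  have h1 : M^j1 + M ≤ M^j2 + 1 := pow_gap hM1 hjj
  have hQP : M^j1 ≤ M^j2 := Nat.pow_le_pow_right hM1 hjj.le
  have hkey : (i2 - i1 - 1) * (M^j2 - M^j1) ≥ 0 := Nat.zero_le _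
  zify at h1 hQP ⊢
  have hi : (i1 : ℤ) + 1 ≤ i2 := by exact_mod_cast hii
  have hmm : (2:ℤ) ≤ m := by exact_mod_cast hm
  have hM' : (M:ℤ) = 5*(m*m) := by exact_mod_cast hM
  have hint : ((i2:ℤ) - i1 - 1) * ((M:ℤ)^j2 - M^j1) ≥ 0 := by
    apply mul_nonneg <;> linarith
  nlinarith

lemma fin4 {u v w z b1 b2 b3 b4 mm : ℕ} (h1 : 1 ≤ mm)
    (hb1 : b1 ≤ mm) (hb2 : b2 ≤ mm) (hb3 : b3 ≤ mm) (hb4 : b4 ≤ mm)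
    (heq : u + b2 + (v + b3) = w + b1 + (z + b4))
    (hgap : u + v + 3*mm ≤ w + z ∨ w + z + 3*mm ≤ u + v) : False := by omega

lemma core {m M i1 i2 j1 j2 e1 e2 e3 e4 : ℕ} (hm : 2 ≤ m) (hM : M = 5*(m*m))
    (hi1 : i1 < m) (hi2 : i2 < m) (hj1 : j1 < m) (hj2 : j2 < m)
    (he1 : e1 ≤ 1) (he2 : e2 ≤ 1) (he3 : e3 ≤ 1) (he4 : e4 ≤ 1)
    (heq : i2 * M^j1 + e2*(1+i2+m*j1) + (i1 * M^j2 + e3*(1+i1+m*j2))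
         = i1 * M^j1 + e1*(1+i1+m*j1) + (i2 * M^j2 + e4*(1+i2+m*j2))) :
    (i1 = i2 ∧ j1 = j2 ∧ e2 + e3 = e1 + e4) ∨ (i1 = i2 ∧ e1 = e2 ∧ e3 = e4)
      ∨ (j1 = j2 ∧ e1 = e3 ∧ e2 = e4) := by
  by_cases hii : i1 = i2
  · subst hii
    by_cases hjj : j1 = j2
    · subst hjj
      refine Or.inl ⟨rfl, rfl, ?_⟩
      generalize hX : i1 * M ^ j1 = X at heq
      generalize hA : m * j1 = A at heq
      interval_cases e1 <;> interval_cases e2 <;> interval_cases e3 <;>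
        interval_cases e4 <;> omega
    · refine Or.inr (Or.inl ⟨rfl, ?_⟩)
      have hAB : m*j1 ≠ m*j2 := fun h => hjj (Nat.eq_of_mul_eq_mul_left (by omega) h)
      generalize hX : i1 * M ^ j1 = X at heq
      generalize hY : i1 * M ^ j2 = Y at heq
      generalize hA : m * j1 = A at heq hAB
      generalize hB : m * j2 = B at heq hAB
      interval_cases e1 <;> interval_cases e2 <;> interval_cases e3 <;>
        interval_cases e4 <;> omega
  · by_cases hjj : j1 = j2
    · subst hjj
      refine Or.inr (Or.inr ⟨rfl, ?_⟩)
      have hAB : (1:ℕ) + i1 ≠ 1 + i2 := by omega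
      generalize hX : i1 * M ^ j1 = X at heq
      generalize hY : i2 * M ^ j1 = Y at heq
      generalize hA : m * j1 = A at heq
      interval_cases e1 <;> interval_cases e2 <;> interval_cases e3 <;>
        interval_cases e4 <;> omega
    · exfalso
      have hd11 : 1 + i1 + m*j1 ≤ m*m := dbound hm hi1 hj1
      have hd21 : 1 + i2 + m*j1 ≤ m*m := dbound hm hi2 hj1
      have hd12 : 1 + i1 + m*j2 ≤ m*m := dbound hm hi1 hj2
      have hd22 : 1 + i2 + m*j2 ≤ m*m := dbound hm hi2 hj2
      have hb1 : e1*(1+i1+m*j1) ≤ m*m := le_trans (Nat.mul_le_mul he1 (le_refl _)) (by linarith)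
      have hb2 : e2*(1+i2+m*j1) ≤ m*m := le_trans (Nat.mul_le_mul he2 (le_refl _)) (by linarith)
      have hb3 : e3*(1+i1+m*j2) ≤ m*m := le_trans (Nat.mul_le_mul he3 (le_refl _)) (by linarith)
      have hb4 : e4*(1+i2+m*j2) ≤ m*m := le_trans (Nat.mul_le_mul he4 (le_refl _)) (by linarith)
      have hmm1 : 1 ≤ m*m := by nlinarith
      rcases Nat.lt_or_ge i1 i2 with hi | hi
      · rcases Nat.lt_or_ge j1 j2 with hj | hj
        · have hg := gap_lemma hm hM hi hj
          exact fin4 hmm1 hb1 hb2 hb3 hb4 heq (Or.inl hg)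
        · have hj' : j2 < j1 := by omega
          have hg := gap_lemma hm hM hi hj'
          exact fin4 hmm1 hb1 hb2 hb3 hb4 heq (Or.inr (by linarith))
      · have hi' : i2 < i1 := by omega
        rcases Nat.lt_or_ge j1 j2 with hj | hj
        · have hg := gap_lemma hm hM hi' hj
          exact fin4 hmm1 hb1 hb2 hb3 hb4 heq (Or.inr (by linarith))
        · have hj' : j2 < j1 := by omega
          have hg := gap_lemma hm hM hi' hj'
          exact fin4 hmm1 hb1 hb2 hb3 hb4 heq (Or.inl (by linarith))


lemma noC4 {n p : ℕ} (hn : 1 ≤ n) (hp : 2 * MM n ^ (2*n) < p)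
    {a1 a2 b1 b2 : (Fin n × Bool) × ZMod p}
    (hne_a : a1 ≠ a2) (hne_b : b1 ≠ b2)
    (h11 : Erel n p a1 b1) (h21 : Erel n p a2 b1)
    (h12 : Erel n p a1 b2) (h22 : Erel n p a2 b2) : False := by
  obtain ⟨e1, he1, H11⟩ := h11
  obtain ⟨e2, he2, H21⟩ := h21
  obtain ⟨e3, he3, H12⟩ := h12
  obtain ⟨e4, he4, H22⟩ := h22
  have hm : 2 ≤ 2*n := by omega
  have hcomb : ((wgt n e2 a2.1 b1.1 + wgt n e3 a1.1 b2.1 : ℕ) : ZMod p)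
             = ((wgt n e1 a1.1 b1.1 + wgt n e4 a2.1 b2.1 : ℕ) : ZMod p) := by
    push_cast
    linear_combination H11 + H22 - H21 - H12
  have hlt1 : wgt n e2 a2.1 b1.1 + wgt n e3 a1.1 b2.1 < p := by
    have u1 := wgt_le hn he2 a2.1 b1.1
    have u2 := wgt_le hn he3 a1.1 b2.1
    omega
  have hlt2 : wgt n e1 a1.1 b1.1 + wgt n e4 a2.1 b2.1 < p := by
    have u1 := wgt_le hn he1 a1.1 b1.1
    have u2 := wgt_le hn he4 a2.1 b2.1
    omega
  have hNat := cast_eq_of_lt hlt1 hlt2 hcomb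
  simp only [wgt] at hNat
  have hM : MM n = 5*((2*n)*(2*n)) := rfl
  rcases core hm hM (iot_lt a1.1) (iot_lt a2.1) (iot_lt b1.1) (iot_lt b2.1)
      he1 he2 he3 he4 hNat with ⟨hi, hj, he⟩ | ⟨hi, he12, he34⟩ | ⟨hj, he13, he24⟩
  · have hk : a1.1 = a2.1 := iot_inj hi
    have hl : b1.1 = b2.1 := iot_inj hj
    have hx : a1.2 ≠ a2.2 := fun h => hne_a (Prod.ext hk h)
    have hy : b1.2 ≠ b2.2 := fun h => hne_b (Prod.ext hl h)
    rw [hk] at H11 H12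
    rw [← hl] at H12 H22
    -- H11 : b1.2 = a1.2 + wgt e1 a2.1 b1.1 ; H21 : b1.2 = a2.2 + wgt e2 a2.1 b1.1
    -- H12 : b2.2 = a1.2 + wgt e3 a2.1 b2.1 ; H22 : b2.2 = a2.2 + wgt e4 a2.1 b2.1
    have hde12 : e1 ≠ e2 := by
      intro h
      subst h
      exact hx (add_right_cancel (H11.symm.trans H21))
    have hde13 : e1 ≠ e3 := by
      intro h
      subst h
      exact hy (H11.trans H12.symm)
    omega
  · have hk : a1.1 = a2.1 := iot_inj hi
    subst he12
    rw [hk] at H11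
    exact hne_a (Prod.ext hk (add_right_cancel (H11.symm.trans H21)))
  · have hl : b1.1 = b2.1 := iot_inj hj
    subst he13
    rw [hl] at H11
    exact hne_b (Prod.ext hl (H11.trans H12.symm))


lemma conn {n p : ℕ} (hn : 1 ≤ n) [hfp : Fact p.Prime] (hp : 2 * MM n ^ (2*n) < p)
    (k0 l0 : Fin n × Bool) :
    ((Gam n p).induce (Sum.inl '' {a : (Fin n × Bool) × ZMod p | a.1 = k0}
      ∪ Sum.inr '' {b : (Fin n × Bool) × ZMod p | b.1 = l0})).Connected := by
  haveI : NeZero p := ⟨hfp.out.pos.ne'⟩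
  have hm : 2 ≤ 2*n := by omega
  have hqq : (2*n)*(2*n) < p := by
    have h2 : MM n ≤ MM n ^ (2*n) := Nat.le_self_pow (by omega) _
    have h3 : MM n = 5*((2*n)*(2*n)) := rfl
    omega
  set d0 : ℕ := 1 + iot k0 + 2*n * iot l0 with hd0def
  have hd0lt : d0 < p := lt_of_le_of_lt (dbound hm (iot_lt _) (iot_lt _)) hqq
  have hd0pos : 0 < d0 := by omega
  have hd0ne : ((d0 : ℕ) : ZMod p) ≠ 0 := by
    intro h
    have hdvd := (ZMod.natCast_eq_zero_iff d0 p).1 h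
    have := Nat.le_of_dvd hd0pos hdvd
    omega
  set S : Set (((Fin n × Bool) × ZMod p) ⊕ ((Fin n × Bool) × ZMod p)) :=
    Sum.inl '' {a : (Fin n × Bool) × ZMod p | a.1 = k0}
      ∪ Sum.inr '' {b : (Fin n × Bool) × ZMod p | b.1 = l0} with hSdef
  let G := (Gam n p).induce S
  show G.Connected
  have hmemA : ∀ x : ZMod p,
      (Sum.inl (k0, x) : ((Fin n × Bool) × ZMod p) ⊕ ((Fin n × Bool) × ZMod p)) ∈ S :=
    fun x => Or.inl ⟨(k0, x), rfl, rfl⟩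
  have hmemB : ∀ y : ZMod p,
      (Sum.inr (l0, y) : ((Fin n × Bool) × ZMod p) ⊕ ((Fin n × Bool) × ZMod p)) ∈ S :=
    fun y => Or.inr ⟨(l0, y), rfl, rfl⟩
  let va : ZMod p → ↥S := fun x => ⟨Sum.inl (k0, x), hmemA x⟩
  let vb : ZMod p → ↥S := fun y => ⟨Sum.inr (l0, y), hmemB y⟩
  have hadjAB : ∀ x y : ZMod p, Erel n p (k0, x) (l0, y) → G.Adj (va x) (vb y) :=
    fun x y h => h
  have hstep : ∀ x : ZMod p, G.Reachable (va x) (va (x + ((d0 : ℕ) : ZMod p))) := by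
    intro x
    have h1 : G.Adj (va x) (vb (x + ((wgt n 1 k0 l0 : ℕ) : ZMod p))) :=
      hadjAB _ _ ⟨1, le_rfl, rfl⟩
    have h2 : G.Adj (va (x + ((d0 : ℕ) : ZMod p)))
        (vb (x + ((wgt n 1 k0 l0 : ℕ) : ZMod p))) :=
      hadjAB _ _ ⟨0, by omega, by simp only [wgt, hd0def]; push_cast; ring⟩
    exact h1.reachable.trans h2.reachable.symm
  have reach0 : ∀ t : ℕ, G.Reachable (va 0) (va ((t : ZMod p) * ((d0 : ℕ) : ZMod p))) := by
    intro t
    induction t with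
    | zero =>
      have h0 : ((0:ℕ) : ZMod p) * ((d0 : ℕ) : ZMod p) = 0 := by push_cast; ring
      rw [h0]
    | succ t ih =>
      have h0 : ((t+1:ℕ) : ZMod p) * ((d0 : ℕ) : ZMod p)
          = (t : ZMod p) * ((d0 : ℕ) : ZMod p) + ((d0 : ℕ) : ZMod p) := by push_cast; ring
      rw [h0]
      exact ih.trans (hstep _)
  have reachA : ∀ x : ZMod p, G.Reachable (va 0) (va x) := by
    intro x
    have hval : (((x * ((d0 : ℕ) : ZMod p)⁻¹).val : ℕ) : ZMod p) * ((d0 : ℕ) : ZMod p) = x := by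
      rw [ZMod.natCast_rightInverse _, mul_assoc, inv_mul_cancel₀ hd0ne, mul_one]
    have h2 := reach0 ((x * ((d0 : ℕ) : ZMod p)⁻¹).val)
    rwa [hval] at h2
  have reachB : ∀ y : ZMod p, G.Reachable (va 0) (vb y) := by
    intro y
    have h1 : G.Adj (va (y - ((wgt n 0 k0 l0 : ℕ) : ZMod p))) (vb y) :=
      hadjAB _ _ ⟨0, by omega, by ring⟩
    exact (reachA _).trans h1.reachable
  have key : ∀ u : ↥S, G.Reachable (va 0) u := by
    rintro ⟨u, hu⟩
    simp only [hSdef, Set.mem_union, Set.mem_image, Set.mem_setOf_eq] at hu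
    rcases hu with ⟨⟨a1, a2⟩, ha, rfl⟩ | ⟨⟨b1, b2⟩, hb, rfl⟩
    · obtain rfl : a1 = k0 := ha
      exact reachA a2
    · obtain rfl : b1 = l0 := hb
      exact reachB b2
  rw [SimpleGraph.connected_iff]
  exact ⟨fun u v => (key u).symm.trans (key v), ⟨va 0⟩⟩

end SizeableProof



/-- For every integer `n ≥ 1` there exists a sizeable graph of rank `n`: finite types `A`
and `B`, a bipartite simple graph `Γ` on `A ⊕ B`, and families of blocks
`Ab i s ⊆ A`, `Bb j t ⊆ B` (indexed by `i, j ∈ Fin n` and signs `s, t : Bool`) such that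
two blocks intersect nontrivially iff they are equal (in particular, each block is
nonempty and distinct blocks are disjoint), the blocks cover `A` resp. `B`, `Γ` has no
embedded cycle of length `4`, and the subgraph of `Γ` induced on the union of any block
of `A` with any block of `B` is connected. -/
theorem exists_sizeable_graph (n : ℕ) (hn : 1 ≤ n) :
    ∃ (A B : Type) (Γ : SimpleGraph (A ⊕ B))
      (Ab : Fin n → Bool → Set A) (Bb : Fin n → Bool → Set B),
      Finite A ∧ Finite B ∧
      (∀ x y, Γ.Adj x y →
        ∃ (a : A) (b : B), (x = Sum.inl a ∧ y = Sum.inr b) ∨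
          (x = Sum.inr b ∧ y = Sum.inl a)) ∧
      (∀ i s j t, (Ab i s ∩ Ab j t).Nonempty ↔ (i = j ∧ s = t)) ∧
      (∀ i s j t, (Bb i s ∩ Bb j t).Nonempty ↔ (i = j ∧ s = t)) ∧
      (⋃ i, ⋃ s, Ab i s) = Set.univ ∧
      (⋃ j, ⋃ t, Bb j t) = Set.univ ∧
      (¬ ∃ (v : A ⊕ B) (c : Γ.Walk v v), c.IsCycle ∧ c.length = 4) ∧
      (∀ i s j t,
        (Γ.induce (Sum.inl '' Ab i s ∪ Sum.inr '' Bb j t)).Connected) := by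

  obtain ⟨p, hpge, hpp⟩ := Nat.exists_infinite_primes (2 * SizeableProof.MM n ^ (2*n) + 1)
  haveI : Fact p.Prime := ⟨hpp⟩
  haveI : NeZero p := ⟨hpp.pos.ne'⟩
  have hp : 2 * SizeableProof.MM n ^ (2*n) < p := by omega
  refine ⟨(Fin n × Bool) × ZMod p, (Fin n × Bool) × ZMod p, SizeableProof.Gam n p,
    fun i s => {a | a.1 = (i, s)}, fun j t => {b | b.1 = (j, t)},
    ?_, ?_, ?_, ?_, ?_, ?_, ?_, ?_, ?_⟩
  · infer_instance
  · infer_instance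
  · rintro (a|b) (a'|b') h
    · exact h.elim
    · exact ⟨a, b', Or.inl ⟨rfl, rfl⟩⟩
    · exact ⟨a', b, Or.inr ⟨rfl, rfl⟩⟩
    · exact h.elim
  · intro i s j t
    constructor
    · rintro ⟨a, h1, h2⟩
      simp only [Set.mem_setOf_eq] at h1 h2
      rw [h1] at h2
      exact ⟨congrArg Prod.fst h2, congrArg Prod.snd h2⟩
    · rintro ⟨rfl, rfl⟩
      exact ⟨((i, s), 0), rfl, rfl⟩
  · intro i s j t
    constructor
    · rintro ⟨a, h1, h2⟩
      simp only [Set.mem_setOf_eq] at h1 h2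
      rw [h1] at h2
      exact ⟨congrArg Prod.fst h2, congrArg Prod.snd h2⟩
    · rintro ⟨rfl, rfl⟩
      exact ⟨((i, s), 0), rfl, rfl⟩
  · apply Set.eq_univ_of_forall
    intro a
    simp only [Set.mem_iUnion]
    exact ⟨a.1.1, a.1.2, rfl⟩
  · apply Set.eq_univ_of_forall
    intro a
    simp only [Set.mem_iUnion]
    exact ⟨a.1.1, a.1.2, rfl⟩
  · rintro ⟨v, c, hcyc, hlen⟩
    cases c with
    | nil => simp at hlen
    | cons h1 q1 =>
      rename_i w1
      cases q1 with
      | nil => simp at hlen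
      | cons h2 q2 =>
        rename_i w2
        cases q2 with
        | nil => simp at hlen
        | cons h3 q3 =>
          rename_i w3
          cases q3 with
          | nil => simp at hlen
          | cons h4 q4 =>
            rename_i w4
            cases q4 with
            | cons h5 q5 => simp [SimpleGraph.Walk.length_cons] at hlen
            | nil =>
              have hnd := hcyc.support_nodup
              simp [SimpleGraph.Walk.support_cons, List.nodup_cons] at hnd
              obtain ⟨⟨h12, h13, h1v⟩, ⟨h23, h2v⟩, h3v⟩ := hnd
              clear hcyc hlen
              rcases v with a|b
              · rcases w1 with a1|b1
                · exact h1
                · rcases w2 with a2|b2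
                  · rcases w3 with a3|b3
                    · exact h3
                    · refine SizeableProof.noC4 hn hp ?_ ?_ h1 h2 h4 h3
                      · exact fun h => h2v (by rw [h])
                      · exact fun h => h13 (by rw [h])
                  · exact h2
              · rcases w1 with a1|b1
                · rcases w2 with a2|b2
                  · exact h2
                  · rcases w3 with a3|b3
                    · refine SizeableProof.noC4 hn hp ?_ ?_ h1 h4 h2 h3
                      · exact fun h => h13 (by rw [h])
                      · exact fun h => h2v (by rw [h])
                    · exact h3
                · exact h1
  · intro i s j t
    exact SizeableProof.conn hn hp (i, s) (j, t)
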